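/- Let K ⊂ ℂ be compact, connected, full, and locally connected, and let K₀ be the closure of a connected component of the interior of K. The canonical projection (retraction) of K onto K₀, which fixes K₀ and sends each z' ∈ K ∖ K₀ to the unique boundary point of K₀ through which all paths from z' into K₀ must pass, takes values in an at most countable subset of ∂K₀ on K ∖ K₀. -/

import Mathlib

open Set Metric Filter Topology

/-- A set is full if its complement has no bounded connected components. -/
def IsFull (K : Set ℂ) : Prop :=
  ∀ w ∉ K, ¬ Bornology.IsBounded (connectedComponentIn Kᶜ w)

/-- `γ` is a path in `K` from `a` to `b`, parametrized over `[0,1]`. -/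
def IsPathIn (K : Set ℂ) (γ : ℝ → ℂ) (a b : ℂ) : Prop :=
  ContinuousOn γ (Set.Icc 0 1) ∧ γ 0 = a ∧ γ 1 = b ∧ γ '' Set.Icc 0 1 ⊆ K

/-- Local connectedness hypothesis for a compact set. -/
def LCSet (K : Set ℂ) : Prop :=
  ∀ z ∈ K, ∀ U ∈ nhds z, ∃ V ∈ nhds z, V ⊆ U ∧ IsConnected (V ∩ K)


lemma ulc {K : Set ℂ} (hK : IsCompact K) (hlc : LCSet K) {ε : ℝ} (hε : 0 < ε) :
    ∃ δ > 0, ∀ y ∈ K, ∀ w ∈ K, dist y w < δ →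
      ∃ S, S ⊆ K ∧ IsPreconnected S ∧ y ∈ S ∧ w ∈ S ∧ S ⊆ ball y ε := by
  have key : ∀ z : ℂ, ∃ r : ℝ, 0 < r ∧ (z ∈ K → ∀ y ∈ K, ∀ w ∈ K,
      y ∈ ball z r → w ∈ ball z (2 * r) →
      ∃ S, S ⊆ K ∧ IsPreconnected S ∧ y ∈ S ∧ w ∈ S ∧ S ⊆ ball y ε) := by
    intro z
    by_cases hz : z ∈ K
    · obtain ⟨V, hVn, hVsub, hVc⟩ := hlc z hz (ball z (ε / 3)) (ball_mem_nhds _ (by linarith))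
      obtain ⟨r0, hr0, hball⟩ := Metric.mem_nhds_iff.mp hVn
      refine ⟨r0 / 2, by linarith, fun _ y hy w hw hyb hwb => ?_⟩
      refine ⟨V ∩ K, inter_subset_right, hVc.isPreconnected, ⟨hball ?_, hy⟩, ⟨hball ?_, hw⟩, ?_⟩
      · exact mem_ball.mpr (lt_of_lt_of_le (mem_ball.mp hyb) (by linarith))
      · simpa [two_mul] using hwb
      · intro s hs
        have hsz : dist s z < ε / 3 := mem_ball.mp (hVsub hs.1)
        have hyz : dist y z < ε / 3 := by
          have : dist y z < r0 / 2 := mem_ball.mp hyb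
          have : y ∈ V := hball (by simpa using lt_of_lt_of_le this (by linarith))
          exact mem_ball.mp (hVsub this)
        have : dist s y ≤ dist s z + dist z y := dist_triangle _ _ _
        rw [dist_comm z y] at this
        exact mem_ball.mpr (by linarith)
    · exact ⟨1, one_pos, fun h => absurd h hz⟩
  choose r hr0 hrP using key
  obtain ⟨t, htK, htcov⟩ := hK.elim_nhds_subcover (fun z => ball z (r z))
    (fun z hz => ball_mem_nhds _ (hr0 z))
  by_cases ht : t.Nonempty
  · refine ⟨t.inf' ht r, ?_, fun y hy w hw hd => ?_⟩
    · exact (Finset.lt_inf'_iff ht).mpr fun z _ => hr0 z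
    · obtain ⟨z, hzt, hyz⟩ := Set.mem_iUnion₂.mp (htcov hy)
      have hδz : t.inf' ht r ≤ r z := Finset.inf'_le _ hzt
      refine hrP z (htK z hzt) y hy w hw hyz (mem_ball.mpr ?_)
      have h1 : dist y z < r z := mem_ball.mp hyz
      have : dist w z ≤ dist w y + dist y z := dist_triangle _ _ _
      have : dist w z < t.inf' ht r + r z := by rw [dist_comm] at hd; linarith
      linarith
  · refine ⟨1, one_pos, fun y hy => ?_⟩
    exact absurd (htcov hy) (by simp [Finset.not_nonempty_iff_eq_empty.mp ht])

/-- δ-chains exist in preconnected sets. -/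

lemma chain_of_preconnected {S : Set ℂ} (hS : IsPreconnected S) {a b : ℂ}
    (ha : a ∈ S) (hb : b ∈ S) {d : ℝ} (hd : 0 < d) :
    ∃ m : ℕ, ∃ c : ℕ → ℂ, c 0 = a ∧ (∀ i, m ≤ i → c i = b) ∧ (∀ i, c i ∈ S) ∧
      (∀ i, dist (c i) (c (i + 1)) < d) := by
  set R : Set ℂ := {z | z ∈ S ∧ ∃ m : ℕ, ∃ c : ℕ → ℂ, c 0 = a ∧ (∀ i, m ≤ i → c i = z) ∧
      (∀ i, c i ∈ S) ∧ (∀ i, dist (c i) (c (i + 1)) < d)} with hR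
  have haR : a ∈ R := ⟨ha, 0, fun _ => a, rfl, fun _ _ => rfl, fun _ => ha, fun _ => by simpa⟩
  have hext : ∀ z ∈ R, ∀ w ∈ S, dist z w < d → w ∈ R := by
    rintro z ⟨hzS, m, c, hc0, hcm, hcS, hcd⟩ w hwS hzw
    refine ⟨hwS, m + 1, fun i => if i ≤ m then c i else w, by simp [hc0], ?_, ?_, ?_⟩
    · intro i hi
      have : ¬ i ≤ m := by omega
      simp [this]
    · intro i; by_cases h : i ≤ m <;> simp [h, hcS i, hwS]
    · intro i
      rcases lt_trichotomy i m with h | h | h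
      · simp [h.le, Nat.succ_le_of_lt h, hcd i]
      · subst h; simp only [le_refl, if_true, Nat.not_le.mpr (Nat.lt_succ_self i), if_false]
        rwa [hcm i le_rfl]
      · simp [Nat.not_le.mpr h, Nat.not_le.mpr (Nat.lt_succ_of_lt h)]; exact hd
  by_cases hbR : b ∈ R
  · obtain ⟨_, m, c, h1, h2, h3, h4⟩ := hbR; exact ⟨m, c, h1, h2, h3, h4⟩
  · exfalso
    set U1 : Set ℂ := ⋃ z ∈ R, ball z d with hU1
    set U2 : Set ℂ := ⋃ z ∈ S \ R, ball z d with hU2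
    have hopen1 : IsOpen U1 := isOpen_biUnion fun _ _ => isOpen_ball
    have hopen2 : IsOpen U2 := isOpen_biUnion fun _ _ => isOpen_ball
    have hcover : S ⊆ U1 ∪ U2 := by
      intro z hz
      by_cases h : z ∈ R
      · exact Or.inl (mem_biUnion h (mem_ball_self hd))
      · exact Or.inr (mem_biUnion ⟨hz, h⟩ (mem_ball_self hd))
    have h1ne : (S ∩ U1).Nonempty := ⟨a, ha, mem_biUnion haR (mem_ball_self hd)⟩
    have h2ne : (S ∩ U2).Nonempty := ⟨b, hb, mem_biUnion ⟨hb, hbR⟩ (mem_ball_self hd)⟩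
    obtain ⟨v, hvS, hv1, hv2⟩ := hS U1 U2 hopen1 hopen2 hcover h1ne h2ne
    obtain ⟨z1, hz1R, hvz1⟩ := mem_iUnion₂.mp hv1
    obtain ⟨z2, hz2, hvz2⟩ := mem_iUnion₂.mp hv2
    have hvR : v ∈ R := hext z1 hz1R v hvS (by rw [dist_comm]; exact mem_ball.mp hvz1)
    exact hz2.2 (hext v hvR z2 hz2.1 (mem_ball.mp hvz2))

lemma nat_block {M j : ℕ} (hM : 0 < M) :
    ((j + 1) % M = 0 ∧ (j + 1) / M = j / M + 1 ∧ j % M = M - 1) ∨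
    ((j + 1) % M = j % M + 1 ∧ (j + 1) / M = j / M) := by
  have hdm := Nat.div_add_mod j M
  rcases Nat.lt_or_ge (j % M + 1) M with h | h
  · right
    have e : j + 1 = M * (j / M) + (j % M + 1) := by omega
    constructor
    · rw [e, Nat.mul_add_mod]; exact Nat.mod_eq_of_lt h
    · rw [e, Nat.mul_add_div hM, Nat.div_eq_of_lt h, add_zero]
  · left
    have hlt : j % M < M := Nat.mod_lt _ hM
    have he : j % M + 1 = M := by omega
    have e : j + 1 = M * (j / M + 1) := by rw [Nat.mul_add, Nat.mul_one]; omega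
    refine ⟨by rw [e]; exact Nat.mul_mod_right _ _, by rw [e]; exact Nat.mul_div_cancel_left _ hM, by omega⟩

/-- Chain data at one level. -/

def GoodChain (K : Set ℂ) (y w : ℂ) (dn : ℝ) (L : ℕ × (ℕ → ℂ)) : Prop :=
  1 ≤ L.1 ∧ L.2 0 = y ∧ (∀ i, L.1 ≤ i → L.2 i = w) ∧ (∀ i, L.2 i ∈ K) ∧
    (∀ i, dist (L.2 i) (L.2 (i + 1)) < dn)

lemma refine_chain {K : Set ℂ} {y w : ℂ} {dn dn' en : ℝ} (hdn' : 0 < dn') (hw : w ∈ K)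
    (hulc : ∀ a ∈ K, ∀ b ∈ K, dist a b < dn →
      ∃ S, S ⊆ K ∧ IsPreconnected S ∧ a ∈ S ∧ b ∈ S ∧ S ⊆ ball a en)
    {L : ℕ × (ℕ → ℂ)} (hL : GoodChain K y w dn L) :
    ∃ L', GoodChain K y w dn' L' ∧ ∃ M, 1 ≤ M ∧ L'.1 = L.1 * M ∧
      ∀ j, dist (L'.2 j) (L.2 (j / M)) ≤ en := by
  obtain ⟨k, p⟩ := L
  obtain ⟨hk, hp0, hpk, hpK, hpd⟩ := hL
  simp only at hk hp0 hpk hpK hpd ⊢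
  -- chains between consecutive points
  have hch : ∀ i : ℕ, ∃ m : ℕ, ∃ c : ℕ → ℂ, c 0 = p i ∧ (∀ r, m ≤ r → c r = p (i + 1)) ∧
      (∀ r, c r ∈ K ∧ c r ∈ ball (p i) en) ∧ (∀ r, dist (c r) (c (r + 1)) < dn') := by
    intro i
    obtain ⟨S, hSK, hSc, hiS, hi1S, hSb⟩ := hulc (p i) (hpK i) (p (i + 1)) (hpK (i + 1)) (hpd i)
    obtain ⟨m, c, h1, h2, h3, h4⟩ := chain_of_preconnected hSc hiS hi1S hdn'
    exact ⟨m, c, h1, h2, fun r => ⟨hSK (h3 r), hSb (h3 r)⟩, h4⟩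
  choose m c hc0 hcm hcS hcd using hch
  set M : ℕ := (Finset.range k).sup m + 1 with hM
  have hM1 : 1 ≤ M := Nat.succ_le_succ (Nat.zero_le _)
  have hMpos : 0 < M := hM1
  have hmle : ∀ i, i < k → m i ≤ M := fun i hi =>
    le_trans (Finset.le_sup (Finset.mem_range.mpr hi)) (Nat.le_succ _)
  set p' : ℕ → ℂ := fun j => if j / M < k then c (j / M) (j % M) else w with hp'
  have hcM : ∀ i, i < k → c i M = p (i + 1) := fun i hi => hcm i M (hmle i hi)
  -- value beyond k*M is w ; value at block start is p i
  have hstart : ∀ i, i < k → p' (i * M) = p i := by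
    intro i hi
    have h1 : i * M / M = i := by
      rw [Nat.mul_div_assoc i (dvd_refl M), Nat.div_self hMpos, Nat.mul_one]
    have h2 : i * M % M = 0 := Nat.mul_mod_left _ _
    simp only [hp', h1, h2, if_pos hi, hc0]
  refine ⟨(k * M, p'), ⟨?_, ?_, ?_, ?_, ?_⟩, M, hM1, rfl, ?_⟩
  · exact Nat.one_le_iff_ne_zero.mpr (Nat.mul_ne_zero (by omega) (by omega))
  · have := hstart 0 (by omega); simpa [hp0] using this
  · intro j hj
    have : k ≤ j / M := (Nat.le_div_iff_mul_le hMpos).mpr hj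
    simp [hp', Nat.not_lt.mpr this]
  · intro j
    by_cases h : j / M < k
    · simp only [hp', if_pos h]; exact (hcS _ _).1
    · simp only [hp', if_neg h]; exact hw
  · -- consecutive distances < dn'
    intro j
    show dist (p' j) (p' (j + 1)) < dn'
    by_cases h : j / M < k
    · rcases nat_block hMpos (M := M) (j := j) with ⟨hm0, hdiv, hmod⟩ | ⟨hmod, hdiv⟩
      · -- crossing a block boundary
        have hpj : p' j = c (j / M) (M - 1) := by simp only [hp', if_pos h, hmod]
        have hnext : p' (j + 1) = p (j / M + 1) := by
          by_cases h2 : (j + 1) / M < k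
          · simp only [hp', if_pos h2, hm0, hdiv, hc0]
          · have : k ≤ j / M + 1 := by omega
            have hk1 : j / M + 1 = k := by omega
            simp only [hp', if_neg h2]
            rw [hk1, hpk k le_rfl]
        rw [hpj, hnext, ← hcM _ h]
        have : M - 1 + 1 = M := by omega
        rw [← this]
        exact hcd _ _
      · -- within a block
        have hpj : p' j = c (j / M) (j % M) := by simp only [hp', if_pos h]
        have hnext : p' (j + 1) = c (j / M) (j % M + 1) := by
          simp only [hp', hdiv, if_pos h, hmod]
        rw [hpj, hnext]; exact hcd _ _
    · have h2 : ¬ (j + 1) / M < k := fun hc' => h (lt_of_le_of_lt (Nat.div_le_div_right (by omega)) hc')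
      simp only [hp', if_neg h, if_neg h2, dist_self]; exact hdn'
  · -- position control
    intro j
    show dist (p' j) (p (j / M)) ≤ en
    by_cases h : j / M < k
    · simp only [hp', if_pos h]
      exact le_of_lt (mem_ball.mp ((hcS _ _).2))
    · have : k ≤ j / M := Nat.not_lt.mp h
      have hen : 0 < en := by
        obtain ⟨S, _, _, haS, _, hSb⟩ := hulc (p 0) (hpK 0) (p 1) (hpK 1) (hpd 0)
        simpa using mem_ball.mp (hSb haS)
      simp only [hp', if_neg h, hpk _ this, dist_self]
      exact hen.le

lemma key {K : Set ℂ} (hK : IsCompact K) (hlc : LCSet K) {ε : ℝ} (hε : 0 < ε) :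
    ∃ δ > 0, ∀ y ∈ K, ∀ w ∈ K, dist y w < δ → JoinedIn (K ∩ closedBall y ε) y w := by
  classical
  set e : ℕ → ℝ := fun n => ε / 3 * (1 / 2) ^ n with he
  have hepos : ∀ n, 0 < e n := fun n => by positivity
  have H : ∀ n : ℕ, ∃ dd, 0 < dd ∧ dd ≤ e n ∧ ∀ a ∈ K, ∀ b ∈ K, dist a b < dd →
      ∃ S, S ⊆ K ∧ IsPreconnected S ∧ a ∈ S ∧ b ∈ S ∧ S ⊆ ball a (e n) := by
    intro n
    obtain ⟨δ, hδ, hp⟩ := ulc hK hlc (hepos n)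
    exact ⟨min δ (e n), lt_min hδ (hepos n), min_le_right _ _,
      fun a ha b hb hab => hp a ha b hb (hab.trans_le (min_le_left _ _))⟩
  choose d hd0 hde hdp using H
  refine ⟨d 0, hd0 0, fun y hy w hw hyw => ?_⟩
  set L0 : ℕ × (ℕ → ℂ) := (1, fun i => if i = 0 then y else w) with hL0def
  have hL0 : GoodChain K y w (d 0) L0 := by
    refine ⟨le_rfl, by simp [hL0def], fun i hi => ?_, fun i => ?_, fun i => ?_⟩
    · have hi' : 1 ≤ i := hi
      have : i ≠ 0 := by omega
      simp [hL0def, this]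
    · by_cases h : i = 0 <;> simp [hL0def, h, hy, hw]
    · by_cases h : i = 0
      · subst h; simpa [hL0def] using hyw
      · have h1 : i + 1 ≠ 0 := by omega
        simp [hL0def, h, h1, hd0 0]
  have REF : ∀ n (L : ℕ × (ℕ → ℂ)), ∃ L', GoodChain K y w (d n) L →
      (GoodChain K y w (d (n + 1)) L' ∧ ∃ M, 1 ≤ M ∧ L'.1 = L.1 * M ∧
        ∀ j, dist (L'.2 j) (L.2 (j / M)) ≤ e n) := by
    intro n L
    by_cases h : GoodChain K y w (d n) L
    · obtain ⟨L', h1, h2⟩ := refine_chain (hd0 (n + 1)) hw (hdp n) h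
      exact ⟨L', fun _ => ⟨h1, h2⟩⟩
    · exact ⟨L, fun h' => absurd h' h⟩
  choose nxt hnxt using REF
  set Ls : ℕ → ℕ × (ℕ → ℂ) := fun n => Nat.rec L0 nxt n with hLsdef
  have hLs : ∀ n, GoodChain K y w (d n) (Ls n) := by
    intro n; induction n with
    | zero => exact hL0
    | succ n ih => exact (hnxt n (Ls n) ih).1
  have hRel : ∀ n, ∃ M, 1 ≤ M ∧ (Ls (n + 1)).1 = (Ls n).1 * M ∧
      ∀ j, dist ((Ls (n + 1)).2 j) ((Ls n).2 (j / M)) ≤ e n :=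
    fun n => (hnxt n (Ls n) (hLs n)).2
  set g : ℕ → ℝ → ℂ := fun n s => (Ls n).2 (⌊s * ((Ls n).1 : ℝ)⌋₊) with hg
  have hgdist : ∀ s n, dist (g n s) (g (n + 1) s) ≤ e n := by
    intro s n
    obtain ⟨M, hM1, hkM, hdist⟩ := hRel n
    have hMne0 : M ≠ 0 := by omega
    have hMne : (M : ℝ) ≠ 0 := by exact_mod_cast hMne0
    have hfloor : ⌊s * ((Ls (n + 1)).1 : ℝ)⌋₊ / M = ⌊s * ((Ls n).1 : ℝ)⌋₊ := by
      rw [hkM]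
      calc ⌊s * (((Ls n).1 * M : ℕ) : ℝ)⌋₊ / M
          = ⌊(s * (((Ls n).1 * M : ℕ) : ℝ)) / (M : ℕ)⌋₊ := (Nat.floor_div_natCast _ M).symm
        _ = ⌊s * ((Ls n).1 : ℝ)⌋₊ := by
            congr 1
            push_cast
            field_simp
    have h2 := hdist ⌊s * ((Ls (n + 1)).1 : ℝ)⌋₊
    rw [hfloor] at h2
    rw [dist_comm]
    exact h2
  have hcauchy : ∀ s, CauchySeq (fun n => g n s) := by
    intro s
    exact cauchySeq_of_le_geometric (1 / 2) (ε / 3) (by norm_num) (fun n => hgdist s n)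
  choose γ hγ using fun s => cauchySeq_tendsto_of_complete (hcauchy s)
  have hlim : ∀ s n, dist (g n s) (γ s) ≤ 2 * e n := by
    intro s n
    have h := dist_le_of_le_geometric_of_tendsto (1 / 2) (ε / 3) (by norm_num)
      (fun n => hgdist s n) (hγ s) n
    have : ε / 3 * (1 / 2) ^ n / (1 - 1 / 2) = 2 * e n := by
      rw [he]; ring
    linarith [h, this.symm.le]
  have hgK : ∀ n s, g n s ∈ K := fun n s => (hLs n).2.2.2.1 _
  have hγK : ∀ s, γ s ∈ K := fun s =>
    hK.isClosed.mem_of_tendsto (hγ s) (Filter.Eventually.of_forall fun n => hgK n s)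
  have hg0 : ∀ n, g n 0 = y := by
    intro n
    have := (hLs n).2.1
    simp only [hg, zero_mul, Nat.floor_zero]
    exact this
  have hγ0 : γ 0 = y := tendsto_nhds_unique (hγ 0) (by simp only [hg0]; exact tendsto_const_nhds)
  have hg1 : ∀ n, g n 1 = w := by
    intro n
    have hk := (hLs n).2.2.1
    simp only [hg, one_mul, Nat.floor_natCast]
    exact hk _ le_rfl
  have hγ1 : γ 1 = w := tendsto_nhds_unique (hγ 1) (by simp only [hg1]; exact tendsto_const_nhds)
  have hball : ∀ s, γ s ∈ closedBall y ε := by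
    intro s
    have h1 : dist (g 0 s) y ≤ e 0 := by
      have halt : g 0 s = y ∨ g 0 s = w := by
        simp only [hg]
        by_cases h : (⌊s * (((Ls 0).1 : ℕ) : ℝ)⌋₊ : ℕ) = 0
        · left; rw [h]; exact (hLs 0).2.1
        · right
          refine (hLs 0).2.2.1 _ ?_
          have hLs01 : (Ls 0).1 = 1 := rfl
          omega
      rcases halt with h | h <;> rw [h]
      · simp [(hepos 0).le]
      · rw [dist_comm]; exact (hyw.trans_le (hde 0)).le
    have h2 := hlim s 0
    have : dist (γ s) y ≤ dist (γ s) (g 0 s) + dist (g 0 s) y := dist_triangle _ _ _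
    rw [dist_comm (γ s) (g 0 s)] at this
    have he0 : e 0 = ε / 3 := by rw [he]; norm_num
    rw [mem_closedBall]
    rw [he0] at h1 h2
    linarith
  have hgstep : ∀ n (a b : ℕ), a ≤ b + 1 → b ≤ a + 1 → dist ((Ls n).2 a) ((Ls n).2 b) ≤ e n := by
    intro n a b h1 h2
    have hd' := (hLs n).2.2.2.2
    rcases Nat.lt_trichotomy a b with h | h | h
    · have hb : b = a + 1 := by omega
      subst hb; exact (hd' a).le.trans (hde n)
    · subst h; simp [(hepos n).le]
    · have ha : a = b + 1 := by omega
      subst ha; rw [dist_comm]; exact (hd' b).le.trans (hde n)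
  have hcont : ContinuousOn γ (Icc 0 1) := by
    intro s hs
    rw [Metric.continuousWithinAt_iff]
    intro η hη
    have h0 : Tendsto (fun n : ℕ => 5 * e n) atTop (𝓝 0) := by
      have := (tendsto_pow_atTop_nhds_zero_of_lt_one (by norm_num : (0:ℝ) ≤ 1 / 2)
        (by norm_num : (1:ℝ) / 2 < 1)).const_mul (5 * (ε / 3))
      simpa [he, mul_assoc, mul_comm, mul_left_comm] using this
    obtain ⟨n, hn⟩ := (h0.eventually (gt_mem_nhds hη)).exists
    have hk1 : 1 ≤ (Ls n).1 := (hLs n).1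
    have hkR : (0 : ℝ) < ((Ls n).1 : ℝ) := by exact_mod_cast hk1
    refine ⟨1 / ((Ls n).1 : ℝ), by positivity, fun s' hs' hds' => ?_⟩
    have hfl : ∀ u v : ℝ, 0 ≤ u → 0 ≤ v → dist u v < 1 / ((Ls n).1 : ℝ) →
        ⌊u * ((Ls n).1 : ℝ)⌋₊ ≤ ⌊v * ((Ls n).1 : ℝ)⌋₊ + 1 := by
      intro u v hu hv huv
      have habs := (abs_sub_lt_iff.mp (by rwa [Real.dist_eq] at huv)).1
      have hle : u * ((Ls n).1 : ℝ) ≤ v * ((Ls n).1 : ℝ) + 1 := by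
        have h1k : (1 / ((Ls n).1 : ℝ)) * ((Ls n).1 : ℝ) = 1 := by field_simp
        nlinarith
      calc ⌊u * ((Ls n).1 : ℝ)⌋₊ ≤ ⌊v * ((Ls n).1 : ℝ) + 1⌋₊ := Nat.floor_mono hle
        _ = ⌊v * ((Ls n).1 : ℝ)⌋₊ + 1 := Nat.floor_add_one (by positivity)
    have h1 := hfl s' s hs'.1 hs.1 hds'
    have h2 := hfl s s' hs.1 hs'.1 (by rwa [dist_comm])
    have hmid : dist (g n s') (g n s) ≤ e n := hgstep n _ _ h1 h2
    have t1 : dist (γ s') (γ s) ≤ dist (γ s') (g n s') + dist (g n s') (γ s) := dist_triangle _ _ _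
    have t2 : dist (g n s') (γ s) ≤ dist (g n s') (g n s) + dist (g n s) (γ s) := dist_triangle _ _ _
    have l1 := hlim s' n
    have l2 := hlim s n
    rw [dist_comm (γ s') (g n s')] at t1
    calc dist (γ s') (γ s) ≤ 2 * e n + (e n + 2 * e n) := by linarith
      _ < η := by linarith
  have himg : γ '' Set.Icc 0 1 ⊆ K ∩ closedBall y ε := by
    rintro _ ⟨t, _, rfl⟩
    exact ⟨hγK t, hball t⟩
  exact JoinedIn.ofLine hcont hγ0 hγ1 himg

lemma pathlem {K : Set ℂ} (hK : IsCompact K) (hlc : LCSet K) {O : Set ℂ} (hO : IsOpen O)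
    {a b : ℂ} (hb : b ∈ connectedComponentIn (K ∩ O) a) : JoinedIn (K ∩ O) a b := by
  classical
  set C := connectedComponentIn (K ∩ O) a with hC
  have ha : a ∈ K ∩ O := connectedComponentIn_nonempty_iff.mp ⟨b, hb⟩
  have haC : a ∈ C := mem_connectedComponentIn ha
  have hCsub : C ⊆ K ∩ O := connectedComponentIn_subset _ _
  -- small paths stay in C
  have small : ∀ z : ℂ, ∃ ρ : ℝ, 0 < ρ ∧ (z ∈ C → ∀ v ∈ C, dist z v < ρ → JoinedIn C z v) := by
    intro z
    by_cases hz : z ∈ C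
    · obtain ⟨r, hr, hrO⟩ : ∃ r > 0, closedBall z r ⊆ O := by
        obtain ⟨r, hr, hrO⟩ := Metric.mem_nhds_iff.mp (hO.mem_nhds (hCsub hz).2)
        exact ⟨r / 2, by linarith, fun u hu => hrO (lt_of_le_of_lt (mem_closedBall.mp hu)
          (by linarith))⟩
      obtain ⟨δ, hδ, hkey⟩ := key hK hlc hr
      refine ⟨δ, hδ, fun _ v hv hzv => ?_⟩
      have hj : JoinedIn (K ∩ closedBall z r) z v :=
        hkey z (hCsub hz).1 v (hCsub hv).1 hzv
      set γ := hj.somePath with hγ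
      have hrange : range γ ⊆ K ∩ O := by
        rintro _ ⟨t, rfl⟩
        exact ⟨(hj.somePath_mem t).1, hrO (hj.somePath_mem t).2⟩
      have hconn : IsPreconnected (range (γ : unitInterval → ℂ)) :=
        (isConnected_range γ.continuous).isPreconnected
      have hzr : z ∈ range (γ : unitInterval → ℂ) := ⟨0, γ.source⟩
      have hsubC : range (γ : unitInterval → ℂ) ⊆ C := by
        have h1 : range (γ : unitInterval → ℂ) ⊆ connectedComponentIn (K ∩ O) z :=
          hconn.subset_connectedComponentIn hzr hrange
        rwa [← connectedComponentIn_eq (F := K ∩ O) (x := a) (y := z) hz] at h1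
      exact ⟨γ, fun t => hsubC ⟨t, rfl⟩⟩
    · exact ⟨1, one_pos, fun h => absurd h hz⟩
  choose ρ hρ0 hρ using small
  set P : Set ℂ := {z | z ∈ C ∧ JoinedIn C a z} with hP
  have haP : a ∈ P := ⟨haC, JoinedIn.refl haC⟩
  by_cases hPC : C \ P = ∅
  · have hbP : b ∈ P := by
      by_contra h
      exact (Set.eq_empty_iff_forall_notMem.mp hPC b) ⟨hb, h⟩
    exact hbP.2.mono hCsub
  · exfalso
    obtain ⟨z0, hz0⟩ := Set.nonempty_iff_ne_empty.mpr hPC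
    set U1 : Set ℂ := ⋃ z ∈ P, ball z (ρ z) with hU1
    set U2 : Set ℂ := ⋃ z ∈ C \ P, ball z (ρ z) with hU2
    have hCpre : IsPreconnected C := isPreconnected_connectedComponentIn
    obtain ⟨v, hvC, hv1, hv2⟩ := hCpre U1 U2 (isOpen_biUnion fun _ _ => isOpen_ball)
      (isOpen_biUnion fun _ _ => isOpen_ball)
      (fun z hz => by
        by_cases h : z ∈ P
        · exact Or.inl (mem_biUnion h (mem_ball_self (hρ0 z)))
        · exact Or.inr (mem_biUnion ⟨hz, h⟩ (mem_ball_self (hρ0 z))))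
      ⟨a, haC, mem_biUnion haP (mem_ball_self (hρ0 a))⟩
      ⟨z0, hz0.1, mem_biUnion hz0 (mem_ball_self (hρ0 z0))⟩
    obtain ⟨z1, hz1P, hvz1⟩ := mem_iUnion₂.mp hv1
    obtain ⟨z2, hz2, hvz2⟩ := mem_iUnion₂.mp hv2
    have hj1 : JoinedIn C z1 v := hρ z1 hz1P.1 v hvC (by rw [dist_comm]; exact mem_ball.mp hvz1)
    have hj2 : JoinedIn C z2 v := hρ z2 hz2.1 v hvC (by rw [dist_comm]; exact mem_ball.mp hvz2)
    exact hz2.2 ⟨hz2.1, (hz1P.2.trans hj1).trans hj2.symm⟩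

/-- Convert a `JoinedIn` into an explicit path function on `[0, 1]`. -/

lemma joinedIn_exists_fun {S : Set ℂ} {a b : ℂ} (h : JoinedIn S a b) :
    ∃ f : ℝ → ℂ, ContinuousOn f (Set.Icc 0 1) ∧ f 0 = a ∧ f 1 = b ∧ f '' Set.Icc 0 1 ⊆ S := by
  obtain ⟨γ, hγ⟩ := h
  refine ⟨fun t => γ (Set.projIcc 0 1 zero_le_one t), ?_, ?_, ?_, ?_⟩
  · exact (γ.continuous.comp continuous_projIcc).continuousOn
  · simp
  · simp
  · rintro _ ⟨t, _, rfl⟩; exact hγ _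

lemma proj_const (K : Set ℂ) (hK : IsCompact K) (hconn : IsConnected K) (hlc : LCSet K)
    (x : ℂ) (hx : x ∈ interior K) (K₀ : Set ℂ) (hK₀cl : IsClosed K₀) (hK₀K : K₀ ⊆ K)
    (hxint : x ∈ interior K₀)
    (hW : ∀ q ∈ frontier K₀, IsPreconnected (K₀ \ {q}))
    (π : ℂ → ℂ)
    (hproj : ∀ z' ∈ K \ K₀, π z' ∈ frontier K₀ ∧
      ∀ b ∈ interior K₀, ∀ γ : ℝ → ℂ, IsPathIn K γ z' b → π z' ∈ γ '' Set.Icc 0 1)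
    {z₁ z₂ : ℂ} (hz₁ : z₁ ∈ K \ K₀) (hz₂ : z₂ ∈ K \ K₀)
    (hcomp : connectedComponentIn (K \ K₀) z₁ = connectedComponentIn (K \ K₀) z₂) :
    π z₁ = π z₂ := by
  classical
  by_contra hne
  set p := π z₁ with hp
  set q := π z₂ with hq
  have hpf : p ∈ frontier K₀ := (hproj z₁ hz₁).1
  have hqf : q ∈ frontier K₀ := (hproj z₂ hz₂).1
  have hKK₀ : K \ K₀ = K ∩ K₀ᶜ := Set.diff_eq _ _
  -- a path from z₂ to z₁ inside K \ K₀
  have hα : JoinedIn (K \ K₀) z₂ z₁ := by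
    rw [hKK₀]
    apply pathlem hK hlc hK₀cl.isOpen_compl
    rw [← hKK₀, ← hcomp]
    exact mem_connectedComponentIn hz₁
  -- q is unavoidable from z₁ as well
  have hUq : ∀ γ : ℝ → ℂ, IsPathIn K γ z₁ x → q ∈ γ '' Set.Icc 0 1 := by
    intro γ hγ
    obtain ⟨αp, hαp⟩ := hα
    set γP : Path z₁ x :=
      ⟨⟨fun t : unitInterval => γ t, continuousOn_iff_continuous_restrict.mp hγ.1⟩,
        hγ.2.1, hγ.2.2.1⟩ with hγP
    set δ := αp.trans γP with hδ
    set f : ℝ → ℂ := fun t => δ (Set.projIcc 0 1 zero_le_one t) with hf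
    have hγPr : range (γP : unitInterval → ℂ) = γ '' Set.Icc 0 1 :=
      (Set.image_eq_range γ (Set.Icc 0 1)).symm
    have hδr : range (δ : unitInterval → ℂ) ⊆ K := by
      rw [hδ, Path.trans_range]
      rintro u (hu | hu)
      · obtain ⟨t, ht⟩ := hu
        exact (ht ▸ hαp t).1
      · rw [hγPr] at hu; exact hγ.2.2.2 hu
    have hfP : IsPathIn K f z₂ x := by
      refine ⟨(δ.continuous.comp continuous_projIcc).continuousOn, ?_, ?_, ?_⟩
      · simp [hf]
      · simp [hf]
      · rintro _ ⟨t, _, rfl⟩; exact hδr ⟨_, rfl⟩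
    have hq2 := (hproj z₂ hz₂).2 x hxint f hfP
    have hqδ : q ∈ range (δ : unitInterval → ℂ) := by
      obtain ⟨t, _, ht⟩ := hq2; exact ⟨_, ht⟩
    rw [hδ, Path.trans_range] at hqδ
    rcases hqδ with h | h
    · exfalso
      obtain ⟨t, ht⟩ := h
      have := hαp t
      rw [ht] at this
      exact this.2 (hK₀cl.frontier_subset hqf)
    · rwa [hγPr] at h
  have hUp : ∀ γ : ℝ → ℂ, IsPathIn K γ z₁ x → p ∈ γ '' Set.Icc 0 1 :=
    fun γ hγ => (hproj z₁ hz₁).2 x hxint γ hγ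
  -- a fixed path from z₁ to x
  have hjf : JoinedIn K z₁ x := by
    have h1 : JoinedIn (K ∩ univ) z₁ x := by
      apply pathlem hK hlc isOpen_univ
      rw [inter_univ]
      exact hconn.isPreconnected.subset_connectedComponentIn hz₁.1 subset_rfl
        (interior_subset hx)
    rwa [inter_univ] at h1
  obtain ⟨f₀, hf₀c, hf₀0, hf₀1, hf₀K⟩ := joinedIn_exists_fun hjf
  have hf₀P : IsPathIn K f₀ z₁ x := ⟨hf₀c, hf₀0, hf₀1, hf₀K⟩
  set A : ℂ → Set ℝ := fun z => Set.Icc 0 1 ∩ f₀ ⁻¹' {z} with hA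
  have hAbdd : ∀ z, BddBelow (A z) := fun z => ⟨0, fun u hu => hu.1.1⟩
  have hmem : ∀ z, (∀ γ : ℝ → ℂ, IsPathIn K γ z₁ x → z ∈ γ '' Set.Icc 0 1) →
      sInf (A z) ∈ A z := by
    intro z hz
    have hcl : IsClosed (A z) :=
      hf₀c.preimage_isClosed_of_isClosed isClosed_Icc isClosed_singleton
    obtain ⟨t, ht, hft⟩ := hz f₀ hf₀P
    exact hcl.csInf_mem ⟨t, ht, hft⟩ (hAbdd z)
  have main : ∀ p' q' : ℂ, p' ∈ frontier K₀ → q' ∈ frontier K₀ →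
      (∀ γ : ℝ → ℂ, IsPathIn K γ z₁ x → p' ∈ γ '' Set.Icc 0 1) →
      (∀ γ : ℝ → ℂ, IsPathIn K γ z₁ x → q' ∈ γ '' Set.Icc 0 1) →
      sInf (A p') < sInf (A q') → False := by
    intro p' q' hp'f hq'f hup huq hlt
    set tp := sInf (A p') with htpdef
    have htp : tp ∈ A p' := hmem p' hup
    have hq'ne : ∀ t ∈ Set.Icc (0:ℝ) tp, f₀ t ≠ q' := by
      intro t ht hft
      have h1 : t ∈ A q' := ⟨⟨ht.1, le_trans ht.2 htp.1.2⟩, hft⟩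
      have h2 : sInf (A q') ≤ t := csInf_le (hAbdd q') h1
      have := ht.2
      linarith
    -- a path from p' to x avoiding q'
    have hη : JoinedIn (K \ {q'}) p' x := by
      have hd : K \ {q'} = K ∩ {q'}ᶜ := Set.diff_eq _ _
      rw [hd]
      apply pathlem hK hlc isOpen_compl_singleton
      have hp'K₀ : p' ∈ K₀ := hK₀cl.frontier_subset hp'f
      have hp'q' : p' ≠ q' := by
        rintro rfl
        exact lt_irrefl _ hlt
      refine (hW q' hq'f).subset_connectedComponentIn ⟨hp'K₀, hp'q'⟩ ?_
        ⟨interior_subset hxint, fun h => hq'f.2 (h ▸ hxint)⟩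
      intro u hu
      exact ⟨hK₀K hu.1, hu.2⟩
    obtain ⟨η, hηc, hη0, hη1, hηS⟩ := joinedIn_exists_fun hη
    have htp01 : tp ∈ Set.Icc (0:ℝ) 1 := htp.1
    set f1 : ℝ → ℂ := fun s => f₀ (tp * s) with hf1
    have hf1c : ContinuousOn f1 (Set.Icc 0 1) := by
      apply hf₀c.comp (continuous_const.mul continuous_id).continuousOn
      intro s hs
      constructor
      · exact mul_nonneg htp01.1 hs.1
      · calc tp * s ≤ tp * 1 := mul_le_mul_of_nonneg_left hs.2 htp01.1
          _ = tp := mul_one _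
          _ ≤ 1 := htp01.2
    have hf10 : f1 0 = z₁ := by simp only [hf1, mul_zero]; exact hf₀0
    have hf11 : f1 1 = p' := by simp only [hf1, mul_one]; exact htp.2
    set PB : Path z₁ p' :=
      ⟨⟨fun t : unitInterval => f1 t, continuousOn_iff_continuous_restrict.mp hf1c⟩,
        hf10, hf11⟩ with hPB
    set PC : Path p' x :=
      ⟨⟨fun t : unitInterval => η t, continuousOn_iff_continuous_restrict.mp hηc⟩,
        hη0, hη1⟩ with hPC
    set PD := PB.trans PC with hPD
    set F : ℝ → ℂ := fun t => PD (Set.projIcc 0 1 zero_le_one t) with hF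
    have hPBr : range (PB : unitInterval → ℂ) = f1 '' Set.Icc 0 1 :=
      (Set.image_eq_range f1 (Set.Icc 0 1)).symm
    have hPCr : range (PC : unitInterval → ℂ) = η '' Set.Icc 0 1 :=
      (Set.image_eq_range η (Set.Icc 0 1)).symm
    have hf1K : f1 '' Set.Icc 0 1 ⊆ K := by
      rintro _ ⟨s, hs, rfl⟩
      apply hf₀K
      refine ⟨tp * s, ⟨mul_nonneg htp01.1 hs.1, ?_⟩, rfl⟩
      calc tp * s ≤ tp * 1 := mul_le_mul_of_nonneg_left hs.2 htp01.1
        _ = tp := mul_one _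
        _ ≤ 1 := htp01.2
    have hFP : IsPathIn K F z₁ x := by
      refine ⟨(PD.continuous.comp continuous_projIcc).continuousOn, ?_, ?_, ?_⟩
      · simp [hF]
      · simp [hF]
      · rintro _ ⟨t, _, rfl⟩
        have : PD (Set.projIcc 0 1 zero_le_one t) ∈ range (PD : unitInterval → ℂ) := ⟨_, rfl⟩
        rw [hPD, Path.trans_range] at this
        rcases this with h | h
        · rw [hPBr] at h; exact hf1K h
        · rw [hPCr] at h; exact (hηS h).1
    have hqF := huq F hFP
    obtain ⟨t, _, hFt⟩ := hqF
    have hqr : q' ∈ range (PD : unitInterval → ℂ) := ⟨_, hFt⟩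
    rw [hPD, Path.trans_range] at hqr
    rcases hqr with h | h
    · rw [hPBr] at h
      obtain ⟨s, hs, hfs⟩ := h
      refine hq'ne (tp * s) ⟨mul_nonneg htp01.1 hs.1, ?_⟩ hfs
      calc tp * s ≤ tp * 1 := mul_le_mul_of_nonneg_left hs.2 htp01.1
        _ = tp := mul_one _
    · rw [hPCr] at h
      exact (hηS h).2 rfl
  have hfp : f₀ (sInf (A p)) = p := (hmem p hUp).2
  have hfq : f₀ (sInf (A q)) = q := (hmem q hUq).2
  have hne' : sInf (A p) ≠ sInf (A q) := by
    intro h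
    apply hne
    rw [hp, hq] at *
    rw [← hfp, ← hfq, h]
  rcases lt_or_gt_of_ne hne' with h | h
  · exact main p q hpf hqf hUp hUq h
  · exact main q p hqf hpf hUq hUp h

/-- Let `K ⊂ ℂ` be compact, connected, full and locally connected, `K₀` the closure of a
connected component of the interior of `K`, and `π` the canonical projection of `K` onto
`K₀`: it fixes `K₀` and sends each `z' ∈ K ∖ K₀` to a point of `∂K₀` through which every
path in `K` from `z'` into the interior of `K₀` passes. Then `π` takes at most countably
many values on `K ∖ K₀`. -/
theorem projection_countably_many_values (K : Set ℂ)
    (hK : IsCompact K) (hconn : IsConnected K) (hfull : IsFull K)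
    (hlc : ∀ z ∈ K, ∀ U ∈ nhds z, ∃ V ∈ nhds z, V ⊆ U ∧ IsConnected (V ∩ K))
    (x : ℂ) (hx : x ∈ interior K)
    (K₀ : Set ℂ) (hK₀ : K₀ = closure (connectedComponentIn (interior K) x))
    (π : ℂ → ℂ)
    (hfix : ∀ w ∈ K₀, π w = w)
    (hproj : ∀ z' ∈ K \ K₀, π z' ∈ frontier K₀ ∧
      ∀ b ∈ interior K₀, ∀ γ : ℝ → ℂ, IsPathIn K γ z' b → π z' ∈ γ '' Set.Icc 0 1) :
    (π '' (K \ K₀)).Countable := by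
  classical
  have hlc' : LCSet K := hlc
  set U : Set ℂ := connectedComponentIn (interior K) x with hU
  have hUopen : IsOpen U := isOpen_interior.connectedComponentIn
  have hxU : x ∈ U := mem_connectedComponentIn hx
  have hUK₀ : U ⊆ K₀ := hK₀ ▸ subset_closure
  have hK₀cl : IsClosed K₀ := hK₀ ▸ isClosed_closure
  have hK₀K : K₀ ⊆ K := by
    rw [hK₀]
    calc closure U ⊆ closure (interior K) :=
          closure_mono (connectedComponentIn_subset _ _)
      _ ⊆ closure K := closure_mono interior_subset
      _ = K := hK.isClosed.closure_eq
  have hUint : U ⊆ interior K₀ := interior_maximal hUK₀ hUopen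
  have hxint : x ∈ interior K₀ := hUint hxU
  have hUconn : IsConnected U := isConnected_connectedComponentIn_iff.mpr hx
  have hW : ∀ q ∈ frontier K₀, IsPreconnected (K₀ \ {q}) := by
    intro q hqf
    have hqU : q ∉ U := fun h => hqf.2 (hUint h)
    refine hUconn.isPreconnected.subset_closure ?_ ?_
    · intro u hu
      exact ⟨hUK₀ hu, fun h => hqU (h ▸ hu)⟩
    · intro u hu
      rw [← hK₀]
      exact hu.1
  -- countability of the set of components
  set s : Set ℂ := K \ K₀ with hs
  set f : ℂ → Set ℂ := fun z => connectedComponentIn s z with hf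
  have hcomp_open : ∀ z ∈ s, ∃ O : Set ℂ, IsOpen O ∧ f z ⊆ O ∧ K ∩ O ⊆ f z := by
    intro z hz
    have hrel : ∀ u ∈ f z, ∃ W : Set ℂ, IsOpen W ∧ u ∈ W ∧ K ∩ W ⊆ f z := by
      intro u hu
      have huz : u ∈ s := connectedComponentIn_subset _ _ hu
      obtain ⟨V, hVn, hVsub, hVc⟩ := hlc u huz.1 K₀ᶜ (hK₀cl.isOpen_compl.mem_nhds huz.2)
      refine ⟨interior V, isOpen_interior, mem_interior_iff_mem_nhds.mpr hVn, ?_⟩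
      have h1 : V ∩ K ⊆ connectedComponentIn s u := by
        apply hVc.isPreconnected.subset_connectedComponentIn
        · exact ⟨mem_of_mem_nhds hVn, huz.1⟩
        · intro v hv
          exact ⟨hv.2, hVsub hv.1⟩
      have h2 : connectedComponentIn s u = f z := (connectedComponentIn_eq hu).symm
      intro v hv
      rw [← h2]
      exact h1 ⟨interior_subset hv.2, hv.1⟩
    choose W hWo hWm hWs using hrel
    refine ⟨⋃ u, ⋃ (hu : u ∈ f z), W u hu, isOpen_iUnion fun u => isOpen_iUnion fun hu => hWo u hu, ?_, ?_⟩
    · intro u hu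
      exact mem_iUnion.mpr ⟨u, mem_iUnion.mpr ⟨hu, hWm u hu⟩⟩
    · rintro v ⟨hvK, hvW⟩
      obtain ⟨u, hu, hvu⟩ := mem_iUnion₂.mp hvW
      exact hWs u hu ⟨hvK, hvu⟩
  have hctble : (f '' s).Countable := by
    have hdisj : (f '' s).PairwiseDisjoint (fun C => ((↑) ⁻¹' C : Set ↥K)) := by
      rintro C₁ ⟨u₁, hu₁, rfl⟩ C₂ ⟨u₂, hu₂, rfl⟩ hne
      refine Set.disjoint_left.mpr fun v hv1 hv2 => hne ?_
      have h1 : f u₁ = connectedComponentIn s (v : ℂ) := connectedComponentIn_eq hv1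
      have h2 : f u₂ = connectedComponentIn s (v : ℂ) := connectedComponentIn_eq hv2
      rw [h1, h2]
    apply hdisj.countable_of_isOpen
    · rintro C ⟨u, hu, rfl⟩
      obtain ⟨O, hOopen, hOsub, hOK⟩ := hcomp_open u hu
      have : ((↑) ⁻¹' f u : Set ↥K) = ((↑) ⁻¹' O : Set ↥K) := by
        ext v
        constructor
        · exact fun h => hOsub h
        · exact fun h => hOK ⟨v.2, h⟩
      rw [this]
      exact hOopen.preimage continuous_subtype_val
    · rintro C ⟨u, hu, rfl⟩
      exact ⟨⟨u, hu.1⟩, mem_connectedComponentIn hu⟩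
  -- transfer countability through π using constancy on components
  set h : Set ℂ → ℂ := fun C => if hc : ∃ z, z ∈ s ∧ f z = C then π hc.choose else 0 with hh
  have hsub : π '' s ⊆ h '' (f '' s) := by
    rintro _ ⟨z, hz, rfl⟩
    refine ⟨f z, mem_image_of_mem f hz, ?_⟩
    have hc : ∃ z', z' ∈ s ∧ f z' = f z := ⟨z, hz, rfl⟩
    rw [hh]
    simp only [dif_pos hc]
    obtain ⟨hc1, hc2⟩ := hc.choose_spec
    exact proj_const K hK hconn hlc' x hx K₀ hK₀cl hK₀K hxint hW π hproj hc1 hz hc2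
  exact (hctble.image h).mono hsub
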